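/- Let A̅ be the 2×2 block matrix [[(1 - w_s n1 - w_d n2) I_{r1} + w_s J_{r1,r1}, w_d J_{r1,r2}],[w_d J_{r2,r1}, (1 - w_s n2 - w_d n1) I_{r2} + w_s J_{r2,r2}]], where J_{p,q} is the p×q all-ones matrix, r1 ≤ n1, r2 ≤ n2, r1 + r2 < n1 + n2, r1, r2 ≥ 1, and w_s, w_d > 0 with w_s(n1² + n2²) + 2 w_d n1 n2 = 1. Then every entry of A̅ is nonnegative and every row sum of A̅ is at most 1, i.e. A̅ is substochastic; moreover at least one row sum is strictly less than 1. -/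

import Mathlib

open Matrix BigOperators

/-- The expected regular-agent update matrix `A̅` of the two-community block gossip model,
acting on the `r1 + r2` regular agents. -/
def Abar (n1 n2 r1 r2 : ℕ) (ws wd : ℝ) :
    Matrix (Fin (r1 + r2)) (Fin (r1 + r2)) ℝ :=
  fun k l =>
    if (k : ℕ) < r1 then
      if (l : ℕ) < r1 then (if k = l then 1 - ws * n1 - wd * n2 else 0) + ws
      else wd
    else
      if (l : ℕ) < r1 then wd
      else (if k = l then 1 - ws * n2 - wd * n1 else 0) + ws

lemma sum_split (p q : ℕ) (a b : ℝ) :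
    ∑ l : Fin (p + q), (if (l:ℕ) < p then a else b) = p * a + q * b := by
  rw [Fin.sum_univ_eq_sum_range (fun m => if m < p then a else b)]
  induction q with
  | zero => simp [Finset.sum_ite_of_true, Finset.mem_range.mp]
  | succ n ih =>
      rw [show p + (n+1) = (p+n)+1 from rfl, Finset.sum_range_succ, ih,
        if_neg (by omega)]
      push_cast; ring

set_option maxHeartbeats 1000000 in
/-- `A̅` is substochastic, with at least one row sum strictly less than one. -/
theorem stmt_4 (n1 n2 r1 r2 : ℕ) (hr1 : 1 ≤ r1) (hr2 : 1 ≤ r2)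
    (h1 : r1 ≤ n1) (h2 : r2 ≤ n2) (hs : r1 + r2 < n1 + n2)
    (ws wd : ℝ) (hws : 0 < ws) (hwd : 0 < wd)
    (hnorm : ws * ((n1 : ℝ)^2 + (n2 : ℝ)^2) + 2 * wd * n1 * n2 = 1) :
    (∀ k l, 0 ≤ Abar n1 n2 r1 r2 ws wd k l) ∧
    (∀ k, ∑ l, Abar n1 n2 r1 r2 ws wd k l ≤ 1) ∧
    (∃ k, ∑ l, Abar n1 n2 r1 r2 ws wd k l < 1) := by
  have hn1 : (1:ℝ) ≤ (n1:ℝ) := by exact_mod_cast le_trans hr1 h1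
  have hn2 : (1:ℝ) ≤ (n2:ℝ) := by exact_mod_cast le_trans hr2 h2
  have hA : ws * n1 + wd * n2 ≤ 1 := by
    nlinarith [mul_nonneg hws.le (mul_nonneg (sub_nonneg.2 hn1) (by linarith : (0:ℝ) ≤ (n1:ℝ))),
      mul_nonneg hwd.le (mul_nonneg (by linarith : (0:ℝ) ≤ 2*(n1:ℝ)-1) (by linarith : (0:ℝ) ≤ (n2:ℝ))),
      mul_nonneg hws.le (sq_nonneg (n2:ℝ))]
  have hB : ws * n2 + wd * n1 ≤ 1 := by
    nlinarith [mul_nonneg hws.le (mul_nonneg (sub_nonneg.2 hn2) (by linarith : (0:ℝ) ≤ (n2:ℝ))),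
      mul_nonneg hwd.le (mul_nonneg (by linarith : (0:ℝ) ≤ 2*(n2:ℝ)-1) (by linarith : (0:ℝ) ≤ (n1:ℝ))),
      mul_nonneg hws.le (sq_nonneg (n1:ℝ))]
  -- row sums
  have hrow : ∀ k : Fin (r1 + r2), ∑ l, Abar n1 n2 r1 r2 ws wd k l =
      (if (k:ℕ) < r1 then 1 - ws * (n1 - r1) - wd * (n2 - r2)
       else 1 - ws * (n2 - r2) - wd * (n1 - r1)) := by
    intro k
    by_cases hk : (k:ℕ) < r1
    · have hpt : ∀ l, Abar n1 n2 r1 r2 ws wd k l =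
          (if k = l then 1 - ws * n1 - wd * n2 else 0) + (if (l:ℕ) < r1 then ws else wd) := by
        intro l
        simp only [Abar, if_pos hk]
        by_cases hl : (l:ℕ) < r1
        · simp [hl]
        · simp [hl, show k ≠ l from fun h => hl (h ▸ hk)]
      rw [if_pos hk]
      simp only [hpt]
      rw [Finset.sum_add_distrib, Finset.sum_ite_eq, if_pos (Finset.mem_univ k),
        sum_split r1 r2 ws wd]
      ring
    · have hpt : ∀ l, Abar n1 n2 r1 r2 ws wd k l =
          (if k = l then 1 - ws * n2 - wd * n1 else 0) + (if (l:ℕ) < r1 then wd else ws) := by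
        intro l
        simp only [Abar, if_neg hk]
        by_cases hl : (l:ℕ) < r1
        · simp [hl, show k ≠ l from fun h => hk (h ▸ hl)]
        · simp [hl]
      rw [if_neg hk]
      simp only [hpt]
      rw [Finset.sum_add_distrib, Finset.sum_ite_eq, if_pos (Finset.mem_univ k),
        sum_split r1 r2 wd ws]
      ring
  have hg1 : (0:ℝ) ≤ (n1:ℝ) - r1 := by
    have : (r1:ℝ) ≤ n1 := by exact_mod_cast h1
    linarith
  have hg2 : (0:ℝ) ≤ (n2:ℝ) - r2 := by
    have : (r2:ℝ) ≤ n2 := by exact_mod_cast h2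
    linarith
  have hgs : (0:ℝ) < ((n1:ℝ) - r1) + ((n2:ℝ) - r2) := by
    have : (r1:ℝ) + r2 < (n1:ℝ) + n2 := by exact_mod_cast hs
    linarith
  have hpos : 0 < ws * ((n1:ℝ) - r1) + wd * ((n2:ℝ) - r2) := by
    rcases lt_or_ge 0 ((n1:ℝ) - r1) with h | h
    · have := mul_pos hws h
      nlinarith [mul_nonneg hwd.le hg2]
    · have h2' : 0 < (n2:ℝ) - r2 := by linarith
      have := mul_pos hwd h2'
      nlinarith [mul_nonneg hws.le hg1]
  refine ⟨?_, ?_, ?_⟩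
  · intro k l
    simp only [Abar]
    by_cases hk : (k:ℕ) < r1
    · rw [if_pos hk]
      by_cases hl : (l:ℕ) < r1
      · rw [if_pos hl]
        by_cases hkl : k = l
        · rw [if_pos hkl]; nlinarith
        · rw [if_neg hkl]; linarith
      · rw [if_neg hl]; exact hwd.le
    · rw [if_neg hk]
      by_cases hl : (l:ℕ) < r1
      · rw [if_pos hl]; exact hwd.le
      · rw [if_neg hl]
        by_cases hkl : k = l
        · rw [if_pos hkl]; nlinarith
        · rw [if_neg hkl]; linarith
  · intro k
    rw [hrow k]
    by_cases hk : (k:ℕ) < r1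
    · rw [if_pos hk]
      nlinarith [mul_nonneg hws.le hg1, mul_nonneg hwd.le hg2]
    · rw [if_neg hk]
      nlinarith [mul_nonneg hws.le hg2, mul_nonneg hwd.le hg1]
  · refine ⟨⟨0, by omega⟩, ?_⟩
    rw [hrow]
    have hk0 : ((⟨0, by omega⟩ : Fin (r1 + r2)) : ℕ) < r1 := by show 0 < r1; omega
    rw [if_pos hk0]
    linarith
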